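/- For α ∈ (0,∞), α ≠ 1, the second derivative of the margin-based α-loss is l^{α''}(z) = e^z(α e^z - α + 1) / (α (e^{-z}+1)^{-1/α} (e^z+1)^3). -/

import Mathlib

noncomputable def sigmoid (z : ℝ) : ℝ := 1 / (1 + Real.exp (-z))

noncomputable def alphaLoss (α z : ℝ) : ℝ :=
  (α / (α - 1)) * (1 - sigmoid z ^ (1 - 1 / α))

lemma base_pos (z : ℝ) : 0 < 1 + Real.exp (-z) := by positivity

lemma alphaLoss_eq (α z : ℝ) :
    alphaLoss α z = (α / (α - 1)) * (1 - (1 + Real.exp (-z)) ^ (1 / α - 1)) := by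
  unfold alphaLoss sigmoid
  rw [one_div, Real.inv_rpow (base_pos z).le, ← Real.rpow_neg (base_pos z).le, neg_sub]

lemma hasDerivAt_u (z : ℝ) : HasDerivAt (fun w => 1 + Real.exp (-w)) (-Real.exp (-z)) z := by
  have h : HasDerivAt (fun w : ℝ => -w) (-1) z := (hasDerivAt_id z).neg
  simpa using ((Real.hasDerivAt_exp (-z)).comp z h).const_add 1

lemma hasDerivAt_upow (c z : ℝ) :
    HasDerivAt (fun w => (1 + Real.exp (-w)) ^ c)
      (c * (1 + Real.exp (-z)) ^ (c - 1) * (-Real.exp (-z))) z := by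
  have := (hasDerivAt_u z).rpow_const (p := c) (Or.inl (base_pos z).ne')
  convert this using 1
  ring

lemma deriv_alphaLoss (α : ℝ) (hα : α ≠ 0) (hα1 : α ≠ 1) :
    deriv (fun w => alphaLoss α w)
      = fun z => -Real.exp (-z) * (1 + Real.exp (-z)) ^ (1 / α - 2) := by
  funext z
  have he : (fun w => alphaLoss α w)
      = fun w => (α / (α - 1)) * (1 - (1 + Real.exp (-w)) ^ (1 / α - 1)) :=
    funext (alphaLoss_eq α)
  have h1 := (((hasDerivAt_upow (1 / α - 1) z).const_sub 1).const_mul (α / (α - 1)))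
  rw [he]
  rw [h1.deriv]
  have h2 : (1 / α - 1 - 1) = 1 / α - 2 := by ring
  rw [h2]
  have hA : α - 1 ≠ 0 := sub_ne_zero.mpr hα1
  field_simp
  ring

theorem alphaLoss_second_deriv (α : ℝ) (hα : 0 < α) (hα1 : α ≠ 1) (z : ℝ) :
    deriv (deriv (fun w => alphaLoss α w)) z =
      Real.exp z * (α * Real.exp z - α + 1) /
        (α * (Real.exp (-z) + 1) ^ (-(1 / α)) * (Real.exp z + 1) ^ 3) := by
  rw [deriv_alphaLoss α hα.ne' hα1]
  have hE : HasDerivAt (fun w : ℝ => -Real.exp (-w)) (Real.exp (-z)) z := by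
    have h : HasDerivAt (fun w : ℝ => -w) (-1) z := (hasDerivAt_id z).neg
    exact ((Real.hasDerivAt_exp (-z)).comp z h).neg.congr_deriv (by ring)
  have h2 := hE.mul (hasDerivAt_upow (1 / α - 2) z)
  rw [show (fun z => -Real.exp (-z) * (1 + Real.exp (-z)) ^ (1 / α - 2)) =
      ((fun w => -Real.exp (-w)) * fun w => (1 + Real.exp (-w)) ^ (1 / α - 2)) from rfl, h2.deriv]
  have h3 : (1 / α - 2 - 1) = 1 / α - 3 := by ring
  rw [h3]
  set u : ℝ := 1 + Real.exp (-z) with hu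
  have hupos : 0 < u := base_pos z
  have hcomm : Real.exp (-z) + 1 = u := by rw [hu]; ring
  rw [hcomm, Real.rpow_neg hupos.le]
  have e2 : u ^ (1 / α - 2) = u ^ (1 / α) / u ^ (2 : ℕ) := by
    rw [Real.rpow_sub hupos, ← Real.rpow_natCast u 2]; norm_num
  have e3 : u ^ (1 / α - 3) = u ^ (1 / α) / u ^ (3 : ℕ) := by
    rw [Real.rpow_sub hupos, ← Real.rpow_natCast u 3]; norm_num
  rw [e2, e3]
  have hA : (0:ℝ) < u ^ (1 / α) := Real.rpow_pos_of_pos hupos _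
  set A := u ^ (1 / α)
  have hEz : Real.exp (-z) = (Real.exp z)⁻¹ := Real.exp_neg z
  have hEne : Real.exp z ≠ 0 := (Real.exp_pos z).ne'
  have hu' : u = 1 + (Real.exp z)⁻¹ := by rw [hu, hEz]
  have h1e : Real.exp z + 1 ≠ 0 := by positivity
  rw [hEz, hu']
  have hune : (1 + (Real.exp z)⁻¹) ≠ 0 := by rw [← hu']; exact hupos.ne'
  field_simp
  ring
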